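/- Let α > 0, and suppose D > G > 0. Then the equilibrium effort e* = ln(2αD)/(2α) strictly exceeds the socially optimal effort ê = ln(2αG)/(2α), and consequently G·exp(-2αê) + ê < G·exp(-2αe*) + e*. -/

import Mathlib

/-- If `D > G > 0` then equilibrium effort `e* = ln(2αD)/(2α)` strictly exceeds the
socially optimal effort `ê = ln(2αG)/(2α)`, and the social loss is strictly larger
at `e*` than at `ê`. -/
theorem stmt_6 (α D G : ℝ) (hα : 0 < α) (hG : 0 < G) (hDG : G < D) :
    Real.log (2 * α * G) / (2 * α) < Real.log (2 * α * D) / (2 * α) ∧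
    G * Real.exp (-2 * α * (Real.log (2 * α * G) / (2 * α))) +
        Real.log (2 * α * G) / (2 * α) <
      G * Real.exp (-2 * α * (Real.log (2 * α * D) / (2 * α))) +
        Real.log (2 * α * D) / (2 * α) := by
  have ha : (0:ℝ) < 2 * α := by linarith
  have ha' : (2:ℝ) * α ≠ 0 := ne_of_gt ha
  have hD : 0 < D := lt_trans hG hDG
  have hG2 : 0 < 2 * α * G := by positivity
  have hD2 : 0 < 2 * α * D := by positivity
  have hlog : Real.log (2 * α * G) < Real.log (2 * α * D) :=
    Real.log_lt_log hG2 (by nlinarith)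
  constructor
  · exact div_lt_div_of_pos_right hlog ha
  · have hsimpG : -2 * α * (Real.log (2 * α * G) / (2 * α)) = -Real.log (2 * α * G) := by
      field_simp
    have hsimpD : -2 * α * (Real.log (2 * α * D) / (2 * α)) = -Real.log (2 * α * D) := by
      field_simp
    rw [hsimpG, hsimpD, Real.exp_neg, Real.exp_neg, Real.exp_log hG2, Real.exp_log hD2]
    -- key inequality: log (G/D) < G/D - 1
    have hkey : Real.log (G / D) < G / D - 1 :=
      Real.log_lt_sub_one_of_pos (by positivity) (by
        intro h
        have : G = D := by field_simp at h; linarith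
        linarith)
    have hlogdiv : Real.log (G / D) = Real.log (2 * α * G) - Real.log (2 * α * D) := by
      rw [Real.log_div (ne_of_gt hG) (ne_of_gt hD), Real.log_mul (by positivity) (ne_of_gt hG),
        Real.log_mul (by positivity) (ne_of_gt hD)]
      ring
    rw [hlogdiv] at hkey
    -- now reduce to arithmetic
    have h1 : G * (2 * α * G)⁻¹ = 1 / (2 * α) := by field_simp
    have h2 : G * (2 * α * D)⁻¹ = (G / D) / (2 * α) := by rw [div_div, mul_comm D (2 * α), div_eq_mul_inv]
    rw [h1, h2]
    rw [← add_div, ← add_div, div_lt_div_iff₀ ha ha]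
    have := mul_lt_mul_of_pos_right
      (by linarith : (1:ℝ) + Real.log (2 * α * G) < G / D + Real.log (2 * α * D)) ha
    linarith
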